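/- arXiv:1502.06820 — 5 statements merged into one kernel-verified Lean document; each statement's English description precedes it below -/
import Mathlib

section
/- Let G=(N,L) be a directed graph with nonnegative link weights w, and let s,t be two nodes of G. Suppose every s–t path φ has a correlation coefficient satisfying 1 ≤ ρ(φ) ≤ ρ_max. Let ψ be a conventional shortest path, i.e., an s–t path minimizing the uncorrelated cost U, and let ψ_opt be an s–t path minimizing the correlated cost C, with ρ_opt = ρ(ψ_opt) and opt = C(ψ_opt). Then the correlated cost of the conventional shortest path satisfies C(ψ) ≤ (ρ_max/ρ_opt) · opt. -/
/-- A walk from `s` to `t` along the links of a directed graph with link set `E`,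
recorded as its list of visited nodes. -/
def IsPath {V : Type*} (E : Set (V × V)) (s t : V) (p : List V) : Prop :=
  p.head? = some s ∧ p.getLast? = some t ∧ p.Chain' (fun a b => (a, b) ∈ E)

/-- The uncorrelated cost of a path: the sum of the weights of its links. -/
def pathUCost {V : Type*} (w : V × V → ℝ) (p : List V) : ℝ :=
  ((p.zip p.tail).map w).sum

/-- The correlated (joint total) cost of a path under the deterministic
correlated model: its correlation coefficient times its uncorrelated cost. -/
def pathCCost {V : Type*} (ρ : List V → ℝ) (w : V × V → ℝ) (p : List V) : ℝ :=
  ρ p * pathUCost w p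

/-- If every `s`–`t` path has correlation coefficient between `1` and `ρmax`, then a
conventional shortest path `ψ` has correlated cost at most `(ρmax / ρopt) · opt`. -/
theorem conventional_shortest_path_increasing_correlation_bound
    {V : Type*} (E : Set (V × V)) (w : V × V → ℝ) (hw : ∀ e, 0 ≤ w e)
    (s t : V) (ρ : List V → ℝ) (ρmax : ℝ)
    (hρ : ∀ p, IsPath E s t p → 1 ≤ ρ p ∧ ρ p ≤ ρmax)
    (ψ ψopt : List V)
    (hψ : IsPath E s t ψ) (hψopt : IsPath E s t ψopt)
    (hmin : ∀ p, IsPath E s t p → pathUCost w ψ ≤ pathUCost w p)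
    (hoptmin : ∀ p, IsPath E s t p → pathCCost ρ w ψopt ≤ pathCCost ρ w p) :
    pathCCost ρ w ψ ≤ (ρmax / ρ ψopt) * pathCCost ρ w ψopt := by
  obtain ⟨h1, h2⟩ := hρ ψ hψ
  obtain ⟨h3, h4⟩ := hρ ψopt hψopt
  have hρopt : ρ ψopt ≠ 0 := by linarith
  have hU : (0:ℝ) ≤ pathUCost w ψ := by
    unfold pathUCost
    refine List.sum_nonneg ?_
    intro x hx
    obtain ⟨e, _, rfl⟩ := List.mem_map.mp hx
    exact hw e
  have hUmin := hmin ψopt hψopt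
  have : (ρmax / ρ ψopt) * pathCCost ρ w ψopt = ρmax * pathUCost w ψopt := by
    unfold pathCCost; field_simp
  rw [this]
  unfold pathCCost
  calc ρ ψ * pathUCost w ψ ≤ ρmax * pathUCost w ψ := by nlinarith
    _ ≤ ρmax * pathUCost w ψopt := by nlinarith
end

section
/- Let G=(N,L) be a directed graph with nonnegative link weights w, and let s,t be two nodes of G. Suppose every s–t path φ has a correlation coefficient satisfying 0 < ρ_min ≤ ρ(φ) ≤ 1. Let ψ be a conventional shortest path, i.e., an s–t path minimizing the uncorrelated cost U, and let ψ_opt be an s–t path minimizing the correlated cost C, with opt = C(ψ_opt). Then the correlated cost of the conventional shortest path satisfies C(ψ) ≤ (1/ρ_min) · opt. -/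
/-- If every `s`–`t` path has correlation coefficient between `ρmin > 0` and `1`, then a
conventional shortest path `ψ` has correlated cost at most `(1 / ρmin) · opt`. -/
theorem conventional_shortest_path_decreasing_correlation_bound
    {V : Type*} (E : Set (V × V)) (w : V × V → ℝ) (hw : ∀ e, 0 ≤ w e)
    (s t : V) (ρ : List V → ℝ) (ρmin : ℝ) (hρmin : 0 < ρmin)
    (hρ : ∀ p, IsPath E s t p → ρmin ≤ ρ p ∧ ρ p ≤ 1)
    (ψ ψopt : List V)
    (hψ : IsPath E s t ψ) (hψopt : IsPath E s t ψopt)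
    (hmin : ∀ p, IsPath E s t p → pathUCost w ψ ≤ pathUCost w p)
    (hoptmin : ∀ p, IsPath E s t p → pathCCost ρ w ψopt ≤ pathCCost ρ w p) :
    pathCCost ρ w ψ ≤ (1 / ρmin) * pathCCost ρ w ψopt := by
  have hU : ∀ p : List V, 0 ≤ pathUCost w p := by
    intro p
    exact List.sum_nonneg (by simp only [List.mem_map]; rintro x ⟨e, _, rfl⟩; exact hw e)
  obtain ⟨hρ1, hρ2⟩ := hρ ψ hψ
  obtain ⟨hρ1', hρ2'⟩ := hρ ψopt hψopt
  have h1 : pathCCost ρ w ψ ≤ pathUCost w ψ := by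
    unfold pathCCost
    nlinarith [hU ψ]
  have h2 : pathUCost w ψ ≤ pathUCost w ψopt := hmin ψopt hψopt
  have h3 : ρmin * pathUCost w ψopt ≤ pathCCost ρ w ψopt := by
    unfold pathCCost
    nlinarith [hU ψopt]
  rw [one_div, inv_mul_eq_div, le_div_iff₀ hρmin]
  nlinarith
end

section
/- Let G=(N,L) be a directed graph with nonnegative link weights w, and let s,t be two nodes of G. Suppose every s–t path φ has a correlation coefficient satisfying 0 < ρ_min ≤ ρ(φ) ≤ ρ_max. Let ψ be a conventional shortest path, i.e., an s–t path minimizing the uncorrelated cost U, and let ψ_opt be an s–t path minimizing the correlated cost C, with ρ_opt = ρ(ψ_opt) and opt = C(ψ_opt). Then the correlated cost of the conventional shortest path satisfies C(ψ) ≤ max(ρ_max/ρ_opt, 1/ρ_min) · opt. -/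
/-- If every `s`–`t` path has correlation coefficient between `ρmin > 0` and `ρmax`, then a
conventional shortest path `ψ` has correlated cost at most
`max (ρmax / ρopt) (1 / ρmin) · opt`. -/
theorem conventional_shortest_path_general_correlation_bound
    {V : Type*} (E : Set (V × V)) (w : V × V → ℝ) (hw : ∀ e, 0 ≤ w e)
    (s t : V) (ρ : List V → ℝ) (ρmin ρmax : ℝ) (hρmin : 0 < ρmin)
    (hρ : ∀ p, IsPath E s t p → ρmin ≤ ρ p ∧ ρ p ≤ ρmax)
    (ψ ψopt : List V)
    (hψ : IsPath E s t ψ) (hψopt : IsPath E s t ψopt)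
    (hmin : ∀ p, IsPath E s t p → pathUCost w ψ ≤ pathUCost w p)
    (hoptmin : ∀ p, IsPath E s t p → pathCCost ρ w ψopt ≤ pathCCost ρ w p) :
    pathCCost ρ w ψ ≤ max (ρmax / ρ ψopt) (1 / ρmin) * pathCCost ρ w ψopt := by
  have hU : ∀ p : List V, 0 ≤ pathUCost w p := by
    intro p
    apply List.sum_nonneg
    intro x hx
    obtain ⟨e, _, rfl⟩ := List.mem_map.mp hx
    exact hw e
  obtain ⟨hψlo, hψhi⟩ := hρ ψ hψ
  obtain ⟨holo, hohi⟩ := hρ ψopt hψopt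
  have hopos : 0 < ρ ψopt := lt_of_lt_of_le hρmin holo
  have h1 : pathCCost ρ w ψ ≤ ρmax * pathUCost w ψopt := by
    calc pathCCost ρ w ψ = ρ ψ * pathUCost w ψ := rfl
      _ ≤ ρmax * pathUCost w ψ := by
          exact mul_le_mul_of_nonneg_right hψhi (hU ψ)
      _ ≤ ρmax * pathUCost w ψopt := by
          have hρmaxpos : (0:ℝ) ≤ ρmax := le_trans hρmin.le (le_trans holo hohi)
          exact mul_le_mul_of_nonneg_left (hmin ψopt hψopt) hρmaxpos
  have h2 : ρmax * pathUCost w ψopt = (ρmax / ρ ψopt) * pathCCost ρ w ψopt := by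
    unfold pathCCost
    field_simp
  have h3 : 0 ≤ pathCCost ρ w ψopt := mul_nonneg hopos.le (hU ψopt)
  calc pathCCost ρ w ψ ≤ (ρmax / ρ ψopt) * pathCCost ρ w ψopt := by rw [← h2]; exact h1
    _ ≤ max (ρmax / ρ ψopt) (1 / ρmin) * pathCCost ρ w ψopt :=
        mul_le_mul_of_nonneg_right (le_max_left _ _) h3
end

section
/- Let G=(N,L) be a directed graph with nonnegative link weights w, and let s,t be two nodes of G. Suppose every s–t cut X has a correlation coefficient satisfying 0 < ρ_min ≤ ρ(X) ≤ ρ_max. Let X̂ be a conventional min-cut, i.e., an s–t cut minimizing the uncorrelated cost U, and let X_opt be an s–t cut minimizing the correlated cost C, with ρ_opt = ρ(X_opt) and opt = C(X_opt). Then the correlated cost of the conventional min-cut satisfies C(X̂) ≤ max(ρ_max/ρ_opt, 1/ρ_min) · opt. -/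
/-- An `s`–`t` cut: a set of nodes containing `s` but not `t`. -/
def IsCut {V : Type*} (s t : V) (X : Finset V) : Prop :=
  s ∈ X ∧ t ∉ X

/-- The uncorrelated cost of a cut `X`: the sum of the weights of its cut links,
i.e. the links `(u, v) ∈ L` with `u ∈ X` and `v ∉ X`. -/
def cutUCost {V : Type*} [DecidableEq V] (L : Finset (V × V)) (w : V × V → ℝ)
    (X : Finset V) : ℝ :=
  ∑ e ∈ L.filter (fun e => e.1 ∈ X ∧ e.2 ∉ X), w e

/-- The correlated (joint total) cost of a cut under the deterministic
correlated model: its correlation coefficient times its uncorrelated cost. -/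
def cutCCost {V : Type*} [DecidableEq V] (L : Finset (V × V)) (w : V × V → ℝ)
    (ρ : Finset V → ℝ) (X : Finset V) : ℝ :=
  ρ X * cutUCost L w X

/-- If every `s`–`t` cut has correlation coefficient between `ρmin > 0` and `ρmax`, then a
conventional min-cut `X̂` has correlated cost at most
`max (ρmax / ρopt) (1 / ρmin) · opt`. -/
theorem conventional_min_cut_correlation_bound
    {V : Type*} [Fintype V] [DecidableEq V]
    (L : Finset (V × V)) (w : V × V → ℝ) (hw : ∀ e, 0 ≤ w e)
    (s t : V) (ρ : Finset V → ℝ) (ρmin ρmax : ℝ) (hρmin : 0 < ρmin)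
    (hρ : ∀ X, IsCut s t X → ρmin ≤ ρ X ∧ ρ X ≤ ρmax)
    (Xhat Xopt : Finset V)
    (hXhat : IsCut s t Xhat) (hXopt : IsCut s t Xopt)
    (hmin : ∀ Y, IsCut s t Y → cutUCost L w Xhat ≤ cutUCost L w Y)
    (hoptmin : ∀ Y, IsCut s t Y → cutCCost L w ρ Xopt ≤ cutCCost L w ρ Y) :
    cutCCost L w ρ Xhat ≤ max (ρmax / ρ Xopt) (1 / ρmin) * cutCCost L w ρ Xopt := by
  have hUnn : ∀ X : Finset V, 0 ≤ cutUCost L w X := fun X =>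
    Finset.sum_nonneg fun e _ => hw e
  obtain ⟨h1, h2⟩ := hρ Xhat hXhat
  obtain ⟨h3, h4⟩ := hρ Xopt hXopt
  have hρopt : 0 < ρ Xopt := lt_of_lt_of_le hρmin h3
  have hρhat : 0 < ρ Xhat := lt_of_lt_of_le hρmin h1
  have hρmax : 0 < ρmax := lt_of_lt_of_le hρhat h2
  have step1 : cutCCost L w ρ Xhat ≤ ρmax * cutUCost L w Xhat :=
    mul_le_mul_of_nonneg_right h2 (hUnn Xhat)
  have step2 : ρmax * cutUCost L w Xhat ≤ ρmax * cutUCost L w Xopt :=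
    mul_le_mul_of_nonneg_left (hmin Xopt hXopt) hρmax.le
  have key : ρmax * cutUCost L w Xopt = (ρmax / ρ Xopt) * cutCCost L w ρ Xopt := by
    unfold cutCCost
    field_simp
  have hoptnn : 0 ≤ cutCCost L w ρ Xopt :=
    mul_nonneg hρopt.le (hUnn Xopt)
  calc cutCCost L w ρ Xhat ≤ ρmax * cutUCost L w Xopt := step1.trans step2
    _ = (ρmax / ρ Xopt) * cutCCost L w ρ Xopt := key
    _ ≤ max (ρmax / ρ Xopt) (1 / ρmin) * cutCCost L w ρ Xopt :=
        mul_le_mul_of_nonneg_right (le_max_left _ _) hoptnn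
end

section
/- Let G=(N,L) be a directed graph on a finite node set with strictly positive link weights w, and let s,t be two nodes. If C ⊆ L is a minimum-weight s–t disconnecting link set (a min-cut separating s and t), then C never contains two links of the form (u,v) and (v,y); that is, there are no nodes u, v, y such that both (u,v) ∈ C and (v,y) ∈ C. -/
/-- `ReachableAvoiding L C s v`: there is a directed walk from `s` to `v` that uses
only links of `L` not in `C`. -/
def ReachableAvoiding {V : Type*} (L C : Finset (V × V)) (s v : V) : Prop :=
  Relation.ReflTransGen (fun a b => (a, b) ∈ L ∧ (a, b) ∉ C) s v

/-- `C` is an `s`–`t` disconnecting link set: removing the links of `C` leaves no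
directed path from `s` to `t`. -/
def Disconnects {V : Type*} (L : Finset (V × V)) (s t : V) (C : Finset (V × V)) : Prop :=
  ¬ ReachableAvoiding L C s t

/-- If the head `v` of an erased edge `(u,v)` is already reachable avoiding `C`,
then reachability avoiding `C.erase (u,v)` implies reachability avoiding `C`. -/
lemma reach_erase_head {V : Type*} [DecidableEq V]
    (L C : Finset (V × V)) (s u v x : V)
    (hv : ReachableAvoiding L C s v)
    (h : ReachableAvoiding L (C.erase (u, v)) s x) :
    ReachableAvoiding L C s x := by
  induction h with
  | refl => exact Relation.ReflTransGen.refl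
  | @tail b c hbc hstep ih =>
    rcases hstep with ⟨hL, hne⟩
    by_cases hC : (b, c) ∈ C
    · have : (b, c) = (u, v) := by
        by_contra hne'
        exact hne (Finset.mem_erase.mpr ⟨hne', hC⟩)
      rw [Prod.mk.injEq] at this
      obtain ⟨rfl, rfl⟩ := this
      exact hv
    · exact ih.tail ⟨hL, hC⟩

/-- If the tail `v` of an erased edge `(v,y)` is not reachable avoiding `C`,
then reachability avoiding `C.erase (v,y)` implies reachability avoiding `C`. -/
lemma reach_erase_tail {V : Type*} [DecidableEq V]
    (L C : Finset (V × V)) (s v y x : V)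
    (hv : ¬ ReachableAvoiding L C s v)
    (h : ReachableAvoiding L (C.erase (v, y)) s x) :
    ReachableAvoiding L C s x := by
  induction h with
  | refl => exact Relation.ReflTransGen.refl
  | @tail b c hbc hstep ih =>
    rcases hstep with ⟨hL, hne⟩
    by_cases hC : (b, c) ∈ C
    · have : (b, c) = (v, y) := by
        by_contra hne'
        exact hne (Finset.mem_erase.mpr ⟨hne', hC⟩)
      rw [Prod.mk.injEq] at this
      obtain ⟨rfl, rfl⟩ := this
      exact absurd ih hv
    · exact ih.tail ⟨hL, hC⟩

/-- A minimum-weight `s`–`t` disconnecting link set never contains two links of the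
form `(u, v)` and `(v, y)`. -/
theorem min_cut_no_adjacent_links
    {V : Type*} [Fintype V] [DecidableEq V]
    (L : Finset (V × V)) (w : V × V → ℝ) (hw : ∀ e ∈ L, 0 < w e)
    (s t : V) (C : Finset (V × V)) (hCL : C ⊆ L)
    (hdisc : Disconnects L s t C)
    (hmin : ∀ D ⊆ L, Disconnects L s t D → ∑ e ∈ C, w e ≤ ∑ e ∈ D, w e) :
    ¬ ∃ u v y : V, (u, v) ∈ C ∧ (v, y) ∈ C := by
  rintro ⟨u, v, y, huv, hvy⟩
  -- choose which edge to erase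
  have key : ∃ e ∈ C, Disconnects L s t (C.erase e) := by
    by_cases hv : ReachableAvoiding L C s v
    · exact ⟨(u, v), huv, fun h => hdisc (reach_erase_head L C s u v t hv h)⟩
    · exact ⟨(v, y), hvy, fun h => hdisc (reach_erase_tail L C s v y t hv h)⟩
  rcases key with ⟨e, heC, hdisc'⟩
  have hsub : C.erase e ⊆ L := (Finset.erase_subset e C).trans hCL
  have hle := hmin (C.erase e) hsub hdisc'
  have hsum : ∑ x ∈ C.erase e, w x + w e = ∑ x ∈ C, w x :=
    Finset.sum_erase_add C w heC
  have hpos : 0 < w e := hw e (hCL heC)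
  linarith
end
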